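/- Let N = 2n+1 with n a nonnegative integer, s = −exp(πi/N), q = s² = exp(2πi/N), and let l be an integer with 2l ≡ n (mod N). Then ∑_{j=0}^{N−1} q^{j²} = q^{l²} · ∏_{j=1}^{n} (1 − q^{j}). -/
import Mathlib


open Complex

open Finset


namespace GaussSumAux

noncomputable def Q (r : ℂ) (m : ℕ) : ℂ := ∏ i ∈ range m, (1 - r ^ (i + 1))

noncomputable def B (r : ℂ) (m k : ℕ) : ℂ :=
  if k ≤ m then Q r m / (Q r k * Q r (m - k)) else 0

noncomputable def f (r : ℂ) (m : ℕ) : ℂ := ∑ k ∈ range (m + 1), (-1 : ℂ) ^ k * B r m k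

lemma Q_zero (r : ℂ) : Q r 0 = 1 := by simp [Q]

lemma Q_succ (r : ℂ) (m : ℕ) : Q r (m + 1) = Q r m * (1 - r ^ (m + 1)) :=
  Finset.prod_range_succ _ _

lemma Q_ne_zero {r : ℂ} {m : ℕ} (hr : ∀ i, 1 ≤ i → i ≤ m → r ^ i ≠ 1) : Q r m ≠ 0 := by
  refine Finset.prod_ne_zero_iff.mpr fun i hi => ?_
  have hi' : i + 1 ≤ m := Finset.mem_range.mp hi
  have := hr (i + 1) (by omega) hi'
  intro h
  exact this (by linear_combination -h)

lemma B_zero {r : ℂ} {m : ℕ} (hr : ∀ i, 1 ≤ i → i ≤ m → r ^ i ≠ 1) : B r m 0 = 1 := by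
  simp [B, Q_zero, div_self (Q_ne_zero hr)]

lemma B_self {r : ℂ} {m : ℕ} (hr : ∀ i, 1 ≤ i → i ≤ m → r ^ i ≠ 1) : B r m m = 1 := by
  simp [B, Q_zero, div_self (Q_ne_zero hr)]

lemma B_of_gt {r : ℂ} {m k : ℕ} (h : m < k) : B r m k = 0 := by
  simp [B, Nat.not_le.mpr h]

lemma B_symm {r : ℂ} {m k : ℕ} (h : k ≤ m) : B r m (m - k) = B r m k := by
  simp [B, h, Nat.sub_le, Nat.sub_sub_self h, mul_comm]

lemma neg_one_pow_sub (a j : ℕ) (h : j ≤ a) : ((-1 : ℂ)) ^ (a - j) = (-1) ^ a * (-1) ^ j := by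
  conv_rhs => rw [← Nat.sub_add_cancel h, pow_add, mul_assoc, ← mul_pow]
  norm_num

lemma pascal {r : ℂ} (m j : ℕ) (hr : ∀ i, 1 ≤ i → i ≤ m + 1 → r ^ i ≠ 1) :
    B r (m + 1) (j + 1) = B r m (j + 1) + r ^ (m - j) * B r m j := by
  rcases lt_trichotomy j m with hjm | hjm | hjm
  · -- main case j < m
    obtain ⟨t, ht⟩ : ∃ t, m = j + 1 + t := ⟨m - j - 1, by omega⟩
    subst ht
    have hrj : ∀ i, 1 ≤ i → i ≤ j → r ^ i ≠ 1 := fun i h1 h2 => hr i h1 (by omega)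
    have hrt : ∀ i, 1 ≤ i → i ≤ t → r ^ i ≠ 1 := fun i h1 h2 => hr i h1 (by omega)
    have hQj : Q r j ≠ 0 := Q_ne_zero hrj
    have hQt : Q r t ≠ 0 := Q_ne_zero hrt
    have h1r : (1 : ℂ) - r ^ (j + 1) ≠ 0 := by
      intro h; exact hr (j + 1) (by omega) (by omega) (by linear_combination -h)
    have h2r : (1 : ℂ) - r ^ (t + 1) ≠ 0 := by
      intro h; exact hr (t + 1) (by omega) (by omega) (by linear_combination -h)
    simp only [B, if_pos (show j + 1 ≤ j + 1 + t + 1 by omega),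
      if_pos (show j + 1 ≤ j + 1 + t by omega), if_pos (show j ≤ j + 1 + t by omega)]
    rw [show j + 1 + t + 1 - (j + 1) = t + 1 by omega,
        show j + 1 + t - (j + 1) = t by omega,
        show j + 1 + t - j = t + 1 by omega,
        show j + 1 + t + 1 = (j + 1 + t) + 1 by omega, Q_succ,
        show Q r (j + 1) = Q r j * (1 - r ^ (j + 1)) from Q_succ r j,
        show Q r (t + 1) = Q r t * (1 - r ^ (t + 1)) from Q_succ r t]
    field_simp
    ring
  · -- j = m
    subst hjm
    have hrj : ∀ i, 1 ≤ i → i ≤ j → r ^ i ≠ 1 := fun i h1 h2 => hr i h1 (by omega)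
    have hrj1 : ∀ i, 1 ≤ i → i ≤ j + 1 → r ^ i ≠ 1 := fun i h1 h2 => hr i h1 (by omega)
    rw [B_self hrj1, B_self hrj, B_of_gt (by omega)]
    simp
  · -- j > m
    rw [B_of_gt (by omega), B_of_gt (by omega), B_of_gt (by omega)]
    simp

lemma f_step {r : ℂ} (M : ℕ) (hr : ∀ i, 1 ≤ i → i ≤ 2 * M + 2 → r ^ i ≠ 1) :
    f r (2 * M + 2) = (1 - r ^ (2 * M + 1)) * f r (2 * M) := by
  set m0 := 2 * M with hm0
  have hr2 : ∀ i, 1 ≤ i → i ≤ m0 + 2 → r ^ i ≠ 1 := hr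
  have hr1 : ∀ i, 1 ≤ i → i ≤ m0 + 1 → r ^ i ≠ 1 := fun i h1 h2 => hr i h1 (by omega)
  have hr0 : ∀ i, 1 ≤ i → i ≤ m0 → r ^ i ≠ 1 := fun i h1 h2 => hr i h1 (by omega)
  -- Step 1+2+3 : f (m0+2) = ∑_{j<m0+2} (-1)^j (1+r^j) B (m0+1) j
  have step4 : f r (m0 + 2) =
      ∑ j ∈ range (m0 + 2), (-1 : ℂ) ^ j * ((1 + r ^ j) * B r (m0 + 1) j) := by
    have e1 : f r (m0 + 2)
        = (∑ j ∈ range (m0 + 2), ((-1 : ℂ) ^ (j + 1) * B r (m0 + 1) (j + 1)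
            - (-1 : ℂ) ^ j * (r ^ (m0 + 1 - j) * B r (m0 + 1) j))) + 1 := by
      rw [f, show m0 + 2 + 1 = (m0 + 2) + 1 from rfl, Finset.sum_range_succ']
      rw [Finset.sum_congr rfl (fun j hj => ?_), pow_zero, B_zero hr2, mul_one]
      rw [show m0 + 2 = (m0 + 1) + 1 from rfl, pascal (m0 + 1) j hr2]
      ring
    have e2 : (∑ j ∈ range (m0 + 2), (-1 : ℂ) ^ (j + 1) * B r (m0 + 1) (j + 1)) + 1
        = f r (m0 + 1) := by
      rw [f]
      conv_rhs => rw [Finset.sum_range_succ']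
      conv_lhs => rw [show m0 + 2 = m0 + 1 + 1 from rfl, Finset.sum_range_succ]
      rw [B_of_gt (show m0 + 1 < m0 + 1 + 1 by omega), B_zero hr1]
      ring
    have e3 : (∑ j ∈ range (m0 + 2), (-1 : ℂ) ^ j * (r ^ (m0 + 1 - j) * B r (m0 + 1) j))
        = - ∑ j ∈ range (m0 + 2), (-1 : ℂ) ^ j * (r ^ j * B r (m0 + 1) j) := by
      have hrefl := Finset.sum_range_reflect
        (fun j => (-1 : ℂ) ^ j * (r ^ (m0 + 1 - j) * B r (m0 + 1) j)) (m0 + 2)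
      rw [← hrefl, ← Finset.sum_neg_distrib]
      refine Finset.sum_congr rfl fun j hj => ?_
      have hj' : j ≤ m0 + 1 := by have := Finset.mem_range.mp hj; omega
      rw [show m0 + 2 - 1 - j = m0 + 1 - j by omega,
          show m0 + 1 - (m0 + 1 - j) = j by omega, B_symm hj',
          neg_one_pow_sub (m0 + 1) j hj',
          show ((-1 : ℂ)) ^ (m0 + 1) = -1 by
            rw [hm0, pow_succ, pow_mul]; norm_num]
      ring
    rw [e1, Finset.sum_sub_distrib, e3]
    have : (∑ j ∈ range (m0 + 2), (-1 : ℂ) ^ (j + 1) * B r (m0 + 1) (j + 1))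
        - (- ∑ j ∈ range (m0 + 2), (-1 : ℂ) ^ j * (r ^ j * B r (m0 + 1) j)) + 1
        = f r (m0 + 1) + ∑ j ∈ range (m0 + 2), (-1 : ℂ) ^ j * (r ^ j * B r (m0 + 1) j) := by
      rw [← e2]; ring
    rw [this, f, show m0 + 1 + 1 = m0 + 2 from rfl, ← Finset.sum_add_distrib]
    exact Finset.sum_congr rfl fun j _ => by ring
  -- Step 5 : expand once more down to level m0
  have h0def : ∀ x : ℂ, True := fun _ => trivial
  set h₀ : ℂ := ∑ k ∈ range (m0 + 1), (-1 : ℂ) ^ k * (r ^ k * B r m0 k) with hh₀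
  have stepA : (∑ j ∈ range (m0 + 1),
        (-1 : ℂ) ^ (j + 1) * ((1 + r ^ (j + 1)) * B r m0 (j + 1))) + 2
      = f r m0 + h₀ := by
    have : (∑ j ∈ range (m0 + 1),
          (-1 : ℂ) ^ (j + 1) * ((1 + r ^ (j + 1)) * B r m0 (j + 1))) + 2
        = ∑ k ∈ range (m0 + 2), (-1 : ℂ) ^ k * ((1 + r ^ k) * B r m0 k) := by
      conv_rhs => rw [show m0 + 2 = m0 + 1 + 1 from rfl, Finset.sum_range_succ']
      rw [B_zero hr0]
      ring
    rw [this, show m0 + 2 = (m0 + 1) + 1 from rfl, Finset.sum_range_succ,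
        B_of_gt (by omega), f, hh₀, ← Finset.sum_add_distrib]
    rw [mul_zero, mul_zero, add_zero]
    exact Finset.sum_congr rfl fun j _ => by ring
  have stepG : (∑ j ∈ range (m0 + 1), (-1 : ℂ) ^ j * (r ^ (m0 - j) * B r m0 j)) = h₀ := by
    have hrefl := Finset.sum_range_reflect
      (fun j => (-1 : ℂ) ^ j * (r ^ (m0 - j) * B r m0 j)) (m0 + 1)
    rw [← hrefl, hh₀]
    refine Finset.sum_congr rfl fun j hj => ?_
    have hj' : j ≤ m0 := by have := Finset.mem_range.mp hj; omega
    rw [show m0 + 1 - 1 - j = m0 - j by omega,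
        show m0 - (m0 - j) = j by omega, B_symm hj',
        neg_one_pow_sub m0 j hj',
        show ((-1 : ℂ)) ^ m0 = 1 by rw [hm0, pow_mul]; norm_num]
    ring
  -- combine
  rw [step4]
  rw [show m0 + 2 = (m0 + 1) + 1 from rfl, Finset.sum_range_succ']
  have expand : ∀ j ∈ range (m0 + 1),
      (-1 : ℂ) ^ (j + 1) * ((1 + r ^ (j + 1)) * B r (m0 + 1) (j + 1))
      = (-1 : ℂ) ^ (j + 1) * ((1 + r ^ (j + 1)) * B r m0 (j + 1))
        - ((-1 : ℂ) ^ j * (r ^ (m0 - j) * B r m0 j)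
           + r ^ (m0 + 1) * ((-1 : ℂ) ^ j * B r m0 j)) := by
    intro j hj
    have hj' : j ≤ m0 := by have := Finset.mem_range.mp hj; omega
    rw [pascal m0 j hr1]
    have hpow : r ^ (j + 1) * r ^ (m0 - j) = r ^ (m0 + 1) := by
      rw [← pow_add, show j + 1 + (m0 - j) = m0 + 1 by omega]
    linear_combination (-((-1:ℂ))^j * B r m0 j) * hpow
  rw [Finset.sum_congr rfl expand, Finset.sum_sub_distrib, Finset.sum_add_distrib, stepG]
  have hfm0 : (∑ j ∈ range (m0 + 1), r ^ (m0 + 1) * ((-1 : ℂ) ^ j * B r m0 j))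
      = r ^ (m0 + 1) * f r m0 := by
    rw [f, Finset.mul_sum]
  rw [hfm0, B_zero hr1]
  linear_combination stepA

lemma gauss_id {r : ℂ} (M : ℕ) (hr : ∀ i, 1 ≤ i → i ≤ 2 * M → r ^ i ≠ 1) :
    f r (2 * M) = ∏ j ∈ range M, (1 - r ^ (2 * j + 1)) := by
  induction M with
  | zero => simp [f, B, Q_zero]
  | succ M ih =>
    have hr' : ∀ i, 1 ≤ i → i ≤ 2 * M → r ^ i ≠ 1 := fun i h1 h2 => hr i h1 (by omega)
    have hstep := f_step M (by intro i h1 h2; exact hr i h1 (by omega))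
    rw [show 2 * (M + 1) = 2 * M + 2 by ring, hstep, ih hr', Finset.prod_range_succ]
    ring

lemma B_eval {r : ℂ} (n k : ℕ) (hrN : r ^ (2 * n + 1) = 1)
    (hr : ∀ i, 1 ≤ i → i ≤ 2 * n → r ^ i ≠ 1) (hk : k ≤ 2 * n) :
    (-1 : ℂ) ^ k * B r (2 * n) k = r ^ (∑ i ∈ range k, (2 * n - i)) := by
  have hrk : ∀ i, 1 ≤ i → i ≤ k → r ^ i ≠ 1 := fun i h1 h2 => hr i h1 (by omega)
  have hrmk : ∀ i, 1 ≤ i → i ≤ 2 * n - k → r ^ i ≠ 1 := fun i h1 h2 => hr i h1 (by omega)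
  have hQk : Q r k ≠ 0 := Q_ne_zero hrk
  have hQmk : Q r (2 * n - k) ≠ 0 := Q_ne_zero hrmk
  have hsplit : Q r (2 * n) = Q r (2 * n - k) * ∏ i ∈ range k, (1 - r ^ (2 * n - k + i + 1)) := by
    have h := Finset.prod_range_add (fun i => 1 - r ^ (i + 1)) (2 * n - k) k
    rw [show 2 * n - k + k = 2 * n by omega] at h
    exact h
  have hrefl : ∏ i ∈ range k, (1 - r ^ (2 * n - k + i + 1))
      = ∏ i ∈ range k, (1 - r ^ (2 * n - i)) := by
    rw [← Finset.prod_range_reflect (fun i => 1 - r ^ (2 * n - i)) k]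
    refine Finset.prod_congr rfl fun j hj => ?_
    have hj' : j < k := Finset.mem_range.mp hj
    rw [show 2 * n - (k - 1 - j) = 2 * n - k + j + 1 by omega]
  have hfac : ∀ j ∈ range k, (1 - r ^ (2 * n - j)) / (1 - r ^ (j + 1)) = -r ^ (2 * n - j) := by
    intro j hj
    have hj' : j < k := Finset.mem_range.mp hj
    have hpow : r ^ (2 * n - j) * r ^ (j + 1) = 1 := by
      rw [← pow_add, show 2 * n - j + (j + 1) = 2 * n + 1 by omega, hrN]
    have hne : (1 : ℂ) - r ^ (j + 1) ≠ 0 := by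
      intro h
      exact hr (j + 1) (by omega) (by omega) (by linear_combination -h)
    rw [show (1 : ℂ) - r ^ (2 * n - j) = (-r ^ (2 * n - j)) * (1 - r ^ (j + 1)) by
      linear_combination -hpow]
    exact mul_div_cancel_right₀ _ hne
  have hB : B r (2 * n) k = ∏ i ∈ range k, (-r ^ (2 * n - i)) := by
    rw [B, if_pos hk, hsplit, hrefl]
    rw [mul_comm (Q r k) (Q r (2 * n - k)), mul_div_mul_left _ _ hQmk]
    rw [show Q r k = ∏ i ∈ range k, (1 - r ^ (i + 1)) from rfl, ← Finset.prod_div_distrib]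
    exact Finset.prod_congr rfl hfac
  have hneg : ∏ i ∈ range k, (-r ^ (2 * n - i))
      = ((-1 : ℂ)) ^ k * ∏ i ∈ range k, r ^ (2 * n - i) := by
    calc ∏ i ∈ range k, (-r ^ (2 * n - i))
        = ∏ i ∈ range k, ((-1) * r ^ (2 * n - i)) := by
          refine Finset.prod_congr rfl fun i _ => by ring
      _ = ((-1 : ℂ)) ^ k * ∏ i ∈ range k, r ^ (2 * n - i) := by
          rw [Finset.prod_mul_distrib, Finset.prod_const, Finset.card_range]
  rw [hB, hneg, ← mul_assoc, ← mul_pow]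
  norm_num
  exact Finset.prod_pow_eq_pow_sum _ _ _

lemma key_sum {r : ℂ} (n : ℕ) (hrN : r ^ (2 * n + 1) = 1)
    (hr : ∀ i, 1 ≤ i → i ≤ 2 * n → r ^ i ≠ 1) :
    ∑ k ∈ range (2 * n + 1), r ^ (∑ i ∈ range k, (2 * n - i))
      = ∏ j ∈ range n, (1 - r ^ (2 * j + 1)) := by
  rw [← gauss_id n hr, f]
  refine Finset.sum_congr rfl fun k hk => ?_
  exact (B_eval n k hrN hr (by have := Finset.mem_range.mp hk; omega)).symm


lemma E_cast (n : ℕ) : ∀ k : ℕ, k ≤ 2 * n + 1 →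
    2 * ((∑ i ∈ range k, (2 * n - i) : ℕ) : ℤ) = k * (4 * n + 1 - k) := by
  intro k
  induction k with
  | zero => simp
  | succ k ih =>
    intro hk
    have hk' : k ≤ 2 * n + 1 := by omega
    rw [Finset.sum_range_succ]
    have ih' := ih hk'
    have hcast : ((2 * n - k : ℕ) : ℤ) = 2 * (n : ℤ) - k := by
      have : k ≤ 2 * n := by omega
      push_cast [this]
      ring
    push_cast [hcast] at ih' ⊢
    linear_combination ih'


end GaussSumAux



open GaussSumAux

set_option maxHeartbeats 1000000 in
/-- The identity `∑_{j=0}^{N−1} q^{j²} = q^{l²} ∏_{j=1}^{n} (1 − q^{j})` for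
`N = 2n+1`, `s = −exp(πi/N)`, `q = s² = exp(2πi/N)`, and any integer `l`
with `2l ≡ n (mod N)`. -/
theorem gauss_sum_product_identity (n : ℕ) (l : ℤ)
    (hl : ((2 * n + 1 : ℕ) : ℤ) ∣ (2 * l - (n : ℤ)))
    (s : ℂ) (hs : s = -Complex.exp (Real.pi * Complex.I / (2 * n + 1)))
    (q : ℂ) (hq : q = s ^ 2) :
    ∑ j ∈ Finset.range (2 * n + 1), q ^ (j ^ 2)
      = q ^ (l ^ 2) * ∏ j ∈ Finset.range n, (1 - q ^ (j + 1)) := by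
  haveI : NeZero (2 * n + 1) := ⟨by omega⟩
  -- q is the standard primitive (2n+1)-th root of unity
  have hqexp : q = Complex.exp (2 * (Real.pi : ℂ) * Complex.I / (2 * (n : ℂ) + 1)) := by
    rw [hq, hs]
    rw [show (-Complex.exp ((Real.pi : ℂ) * Complex.I / (2 * (n : ℂ) + 1))) ^ 2
        = Complex.exp ((Real.pi : ℂ) * Complex.I / (2 * (n : ℂ) + 1)) *
          Complex.exp ((Real.pi : ℂ) * Complex.I / (2 * (n : ℂ) + 1)) by ring]
    rw [← Complex.exp_add]
    congr 1
    ring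
  have hprim : IsPrimitiveRoot q (2 * n + 1) := by
    have h := Complex.isPrimitiveRoot_exp (2 * n + 1) (by omega)
    rw [show ((2 * n + 1 : ℕ) : ℂ) = 2 * (n : ℂ) + 1 by push_cast; ring] at h
    rwa [← hqexp] at h
  have hq0 : q ≠ 0 := by rw [hqexp]; exact Complex.exp_ne_zero _
  have hqN : q ^ (2 * n + 1) = 1 := (hprim.pow_eq_one_iff_dvd _).mpr dvd_rfl
  -- zpow congruence
  have hcong : ∀ a b : ℤ, ((2 * n + 1 : ℕ) : ℤ) ∣ b - a → q ^ a = q ^ b := by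
    intro a b ⟨t, ht⟩
    have hb : b = a + ((2 * n + 1 : ℕ) : ℤ) * t := by linarith
    rw [hb, zpow_add₀ hq0, zpow_mul, zpow_natCast, hqN, one_zpow, mul_one]
  -- r = q^n is also a primitive root
  have hr_i : ∀ i, 1 ≤ i → i ≤ 2 * n → (q ^ n) ^ i ≠ 1 := by
    intro i h1 h2 hcontra
    rw [← pow_mul] at hcontra
    have hd : (2 * n + 1) ∣ n * i := (hprim.pow_eq_one_iff_dvd _).mp hcontra
    have hd2 : (2 * n + 1) ∣ 2 * (n * i) := Dvd.dvd.mul_left hd 2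
    have hd3 : (2 * n + 1) ∣ 2 * (n * i) + i := by
      have h5 : 2 * (n * i) + i = (2 * n + 1) * i := by ring
      rw [h5]; exact dvd_mul_right _ _
    have hdi : (2 * n + 1) ∣ i := (Nat.dvd_add_right hd2).mp hd3
    have := Nat.le_of_dvd (by omega) hdi
    omega
  have hrN : (q ^ n) ^ (2 * n + 1) = 1 := by
    rw [← pow_mul, mul_comm, pow_mul, hqN, one_pow]
  -- Gauss's identity specialised
  have hKey := key_sum (r := q ^ n) n hrN hr_i
  -- transform the product side
  have hprodT : ∏ j ∈ range n, (1 - (q ^ n) ^ (2 * j + 1)) = ∏ j ∈ range n, (1 - q ^ (j + 1)) := by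
    rw [← Finset.prod_range_reflect (fun j => 1 - q ^ (j + 1)) n]
    refine Finset.prod_congr rfl fun j hj => ?_
    have hj' : j < n := Finset.mem_range.mp hj
    have hd : ∃ d, n = j + d + 1 := ⟨n - j - 1, by omega⟩
    obtain ⟨d, hd⟩ := hd
    rw [← pow_mul,
      show n * (2 * j + 1) = (n - 1 - j + 1) + (2 * n + 1) * j by
        subst hd; rw [show j + d + 1 - 1 - j = d by omega]; ring,
      pow_add, pow_mul, hqN, one_pow, mul_one]
  -- ψ/Φ machinery
  have hbridge : ∀ g : ZMod (2 * n + 1) → ℂ,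
      ∑ k ∈ range (2 * n + 1), g (k : ZMod (2 * n + 1)) = ∑ x : ZMod (2 * n + 1), g x := by
    intro g
    refine Finset.sum_nbij' (fun k => (k : ZMod (2 * n + 1))) (fun x => x.val)
      (fun a _ => Finset.mem_univ _)
      (fun x _ => Finset.mem_range.mpr (ZMod.val_lt x))
      (fun a ha => ZMod.val_cast_of_lt (Finset.mem_range.mp ha))
      (fun x _ => ZMod.natCast_rightInverse x)
      (fun a _ => rfl)
  set Φ : ZMod (2 * n + 1) → ℂ := fun x => q ^ ((x.val : ℤ) ^ 2) with hΦdef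
  have hΦ : ∀ a : ℤ, q ^ (a ^ 2) = Φ ((a : ZMod (2 * n + 1))) := by
    intro a
    apply hcong
    rw [← ZMod.intCast_zmod_eq_zero_iff_dvd]
    have hval : ((((a : ZMod (2 * n + 1)).val : ℕ)) : ZMod (2 * n + 1)) = (a : ZMod (2 * n + 1)) :=
      ZMod.natCast_rightInverse _
    push_cast
    rw [hval]
    ring
  -- the affine bijection x ↦ 2l·x + l of ZMod (2n+1)
  have hlz : ((2 * l - (n : ℤ) : ℤ) : ZMod (2 * n + 1)) = 0 := by
    rw [ZMod.intCast_zmod_eq_zero_iff_dvd]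
    exact_mod_cast hl
  have hNz : ((2 * n + 1 : ℕ) : ZMod (2 * n + 1)) = 0 := ZMod.natCast_self _
  have hu : (-2 : ZMod (2 * n + 1)) * (2 * (l : ZMod (2 * n + 1))) = 1 := by
    push_cast at hlz hNz
    linear_combination (-2 : ZMod (2 * n + 1)) * hlz - hNz
  have haff : ∑ x : ZMod (2 * n + 1),
      Φ (2 * (l : ZMod (2 * n + 1)) * x + (l : ZMod (2 * n + 1)))
      = ∑ x : ZMod (2 * n + 1), Φ x := by
    refine Finset.sum_nbij'
      (fun x => 2 * (l : ZMod (2 * n + 1)) * x + (l : ZMod (2 * n + 1)))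
      (fun y => -2 * (y - (l : ZMod (2 * n + 1))))
      (fun a _ => Finset.mem_univ _) (fun a _ => Finset.mem_univ _) ?_ ?_ (fun a _ => rfl)
    · intro a _
      show -2 * (2 * (l : ZMod (2 * n + 1)) * a + (l : ZMod (2 * n + 1))
        - (l : ZMod (2 * n + 1))) = a
      linear_combination a * hu
    · intro a _
      show 2 * (l : ZMod (2 * n + 1)) * (-2 * (a - (l : ZMod (2 * n + 1))))
        + (l : ZMod (2 * n + 1)) = a
      linear_combination (a - (l : ZMod (2 * n + 1))) * hu
  -- exponent congruence for the sum terms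
  have hmod : ∀ k : ℕ, k ≤ 2 * n → ((2 * n + 1 : ℕ) : ℤ) ∣
      ((l * (2 * k + 1)) ^ 2 - l ^ 2) - ((n * ∑ i ∈ range k, (2 * n - i) : ℕ) : ℤ) := by
    intro k hk
    obtain ⟨a, ha⟩ := hl
    have hE := E_cast n k (by omega)
    have h4 : ((2 * n + 1 : ℕ) : ℤ) ∣
        4 * (((l * (2 * k + 1)) ^ 2 - l ^ 2) - ((n * ∑ i ∈ range k, (2 * n - i) : ℕ) : ℤ)) := by
      refine ⟨2 * n * k * (k - 1) + 4 * k * (k + 1) * (2 * n * a + (2 * n + 1) * a ^ 2), ?_⟩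
      push_cast at ha hE ⊢
      linear_combination ((4 * (k : ℤ) ^ 2 + 4 * k) * (2 * l + n + (2 * n + 1) * a)) * ha
        + (-2 * (n : ℤ)) * hE
    have hco : IsCoprime (((2 * n + 1 : ℕ) : ℤ)) 4 :=
      ⟨((2 * n + 1 : ℕ) : ℤ), -((n : ℤ) ^ 2 + n), by push_cast; ring⟩
    exact hco.dvd_of_dvd_mul_left h4
  -- transform the sum side
  have hsum1 : ∑ k ∈ range (2 * n + 1), q ^ (n * ∑ i ∈ range k, (2 * n - i))
      = q ^ (-(l ^ 2) : ℤ) *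
        ∑ k ∈ range (2 * n + 1), Φ (((l * (2 * k + 1) : ℤ)) : ZMod (2 * n + 1)) := by
    rw [Finset.mul_sum]
    refine Finset.sum_congr rfl fun k hk => ?_
    have hk' : k ≤ 2 * n := by have := Finset.mem_range.mp hk; omega
    rw [← hΦ (l * (2 * k + 1)), ← zpow_natCast q (n * ∑ i ∈ range k, (2 * n - i)),
      ← zpow_add₀ hq0]
    apply hcong
    obtain ⟨t, ht⟩ := hmod k hk'
    exact ⟨t, by linarith⟩
  have hsum2 : ∑ k ∈ range (2 * n + 1), Φ (((l * (2 * k + 1) : ℤ)) : ZMod (2 * n + 1))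
      = ∑ x : ZMod (2 * n + 1), Φ x := by
    have h1 : ∀ k : ℕ, ((l * (2 * (k : ℤ) + 1) : ℤ) : ZMod (2 * n + 1))
        = 2 * (l : ZMod (2 * n + 1)) * ((k : ℕ) : ZMod (2 * n + 1)) + (l : ZMod (2 * n + 1)) := by
      intro k; push_cast; ring
    calc ∑ k ∈ range (2 * n + 1), Φ (((l * (2 * k + 1) : ℤ)) : ZMod (2 * n + 1))
        = ∑ k ∈ range (2 * n + 1),
            (fun x => Φ (2 * (l : ZMod (2 * n + 1)) * x + (l : ZMod (2 * n + 1))))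
            ((k : ℕ) : ZMod (2 * n + 1)) := by
          refine Finset.sum_congr rfl fun k _ => ?_
          simp only
          rw [← h1 k]
      _ = ∑ x : ZMod (2 * n + 1), Φ (2 * (l : ZMod (2 * n + 1)) * x + (l : ZMod (2 * n + 1))) :=
          hbridge (fun x => Φ (2 * (l : ZMod (2 * n + 1)) * x + (l : ZMod (2 * n + 1))))
      _ = ∑ x : ZMod (2 * n + 1), Φ x := haff
  have hsum3 : ∑ x : ZMod (2 * n + 1), Φ x = ∑ j ∈ range (2 * n + 1), q ^ (j ^ 2) := by
    rw [← hbridge Φ]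
    refine Finset.sum_congr rfl fun j hj => ?_
    rw [show ((j : ℕ) : ZMod (2 * n + 1)) = (((j : ℤ)) : ZMod (2 * n + 1)) by push_cast; rfl]
    rw [← hΦ (j : ℤ), show ((j : ℤ) ^ 2) = ((j ^ 2 : ℕ) : ℤ) by push_cast; ring, zpow_natCast]
  -- put everything together
  have hmain : q ^ (-(l ^ 2) : ℤ) * ∑ j ∈ range (2 * n + 1), q ^ (j ^ 2)
      = ∏ j ∈ range n, (1 - q ^ (j + 1)) := by
    rw [← hsum3, ← hsum2, ← hsum1, ← hprodT, ← hKey]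
    refine Finset.sum_congr rfl fun k _ => ?_
    rw [← pow_mul]
  calc ∑ j ∈ range (2 * n + 1), q ^ (j ^ 2)
      = q ^ (l ^ 2) * (q ^ (-(l ^ 2) : ℤ) * ∑ j ∈ range (2 * n + 1), q ^ (j ^ 2)) := by
        rw [← mul_assoc, ← zpow_add₀ hq0]
        simp
    _ = q ^ (l ^ 2) * ∏ j ∈ range n, (1 - q ^ (j + 1)) := by rw [hmain]
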